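/- Let P ∈ ℂ[X] be monic of degree d ≥ 1. Then the polar derivative D_P(z,u) = d·P(z) + (u − z)·P′(z) has a multiple root with respect to z for every u ∈ ℂ — i.e., for every u ∈ ℂ there exists z with D_P(z,u) = 0 and (d−1)·P′(z) + (u − z)·P″(z) = 0 — if and only if P has a root of multiplicity at least 3, i.e., there exists z* with P(z*) = P′(z*) = P″(z*) = 0. Equivalently, the isodynamic map ID_d is well defined at P exactly when all roots of P have multiplicity at most 2. -/

import Mathlib

open Polynomial

private lemma triple_dvd_of_evals {P : ℂ[X]} {z : ℂ} (h0 : P.eval z = 0)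
    (h1 : (derivative P).eval z = 0) (h2 : (derivative (derivative P)).eval z = 0) :
    (X - C z) ^ 3 ∣ P := by
  obtain ⟨S, hS⟩ := dvd_iff_isRoot.mpr h0
  have hS0 : S.eval z = 0 := by
    rw [hS] at h1; simpa using h1
  obtain ⟨T, hT⟩ := dvd_iff_isRoot.mpr hS0
  have hT0 : T.eval z = 0 := by
    rw [hS, hT] at h2
    have : (2 : ℂ) * T.eval z = 0 := by
      simpa [derivative_mul] using h2
    have h2ne : (2 : ℂ) ≠ 0 := two_ne_zero
    exact (mul_eq_zero.mp this).resolve_left h2ne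
  obtain ⟨W, hW⟩ := dvd_iff_isRoot.mpr hT0
  exact ⟨W, by rw [hS, hT, hW]; ring⟩

private lemma evals_of_triple_dvd {P : ℂ[X]} {z : ℂ} (h : (X - C z) ^ 3 ∣ P) :
    P.eval z = 0 ∧ (derivative P).eval z = 0 ∧ (derivative (derivative P)).eval z = 0 := by
  obtain ⟨W, rfl⟩ := h
  refine ⟨by simp, ?_, ?_⟩ <;> simp [derivative_mul, derivative_pow]

private lemma no_forall_of_no_triple (d : ℕ) (hd : 1 ≤ d) (P : ℂ[X]) (hm : P.Monic)
    (hdeg : P.natDegree = d)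
    (hB : ¬ ∃ zs : ℂ, P.eval zs = 0 ∧ (derivative P).eval zs = 0 ∧
        (derivative (derivative P)).eval zs = 0) :
    ¬ ∀ u : ℂ, ∃ z : ℂ,
        (d : ℂ) * P.eval z + (u - z) * (derivative P).eval z = 0 ∧
        ((d : ℂ) - 1) * (derivative P).eval z
          + (u - z) * (derivative (derivative P)).eval z = 0 := by
  push_neg at hB
  have hP0 : P ≠ 0 := hm.ne_zero
  -- d = 1 case
  rcases eq_or_lt_of_le hd with hd1 | hd2
  · -- d = 1
    intro hA
    have hP : P = X + C (P.coeff 0) := hm.eq_X_add_C (by omega)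
    obtain ⟨z, h1, -⟩ := hA (1 - P.coeff 0)
    rw [hP] at h1
    simp [← hd1] at h1
    have : (1 : ℂ) = 0 := by linear_combination h1
    exact one_ne_zero this
  rcases eq_or_lt_of_le (show 2 ≤ d from hd2) with hd2 | hd3
  · -- d = 2
    intro hA
    have hnd : (derivative P).natDegree ≤ 1 := by
      have := natDegree_derivative_le P
      omega
    have hDP : derivative P = C ((derivative P).coeff 1) * X + C ((derivative P).coeff 0) :=
      eq_X_add_C_of_natDegree_le_one hnd
    have hc1 : (derivative P).coeff 1 = 2 := by
      rw [coeff_derivative]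
      have : P.coeff 2 = 1 := by
        have := hm.coeff_natDegree
        rwa [hdeg, ← hd2] at this
      rw [this]; norm_num
    set e := (derivative P).coeff 0 with he
    obtain ⟨z, -, h2⟩ := hA ((1 - e) / 2)
    rw [hDP, hc1] at h2
    simp [← hd2] at h2
    have : (1 : ℂ) = 0 := by
      field_simp at h2
      linear_combination h2
    exact one_ne_zero this
  -- d ≥ 3
  have hdC : (3 : ℕ) ≤ d := hd3
  have hdne : (d : ℂ) ≠ 0 := by
    exact_mod_cast Nat.cast_ne_zero.mpr (by omega)
  have hd1ne : (d : ℂ) - 1 ≠ 0 := by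
    intro h
    have hc : (d : ℂ) = 1 := by linear_combination h
    have : d = 1 := by exact_mod_cast hc
    omega
  have hP'ne : derivative P ≠ 0 := by
    intro h
    have := natDegree_eq_zero_of_derivative_eq_zero h
    omega
  set Q : ℂ[X] := C (d : ℂ) * P * derivative (derivative P)
      - C ((d : ℂ) - 1) * (derivative P) ^ 2 with hQdef
  by_cases hQ : Q = 0
  · -- Q ≡ 0 : derive contradiction
    intro _
    have hdegpos : 0 < P.degree := by
      rw [degree_eq_natDegree hP0, hdeg]
      exact_mod_cast (by omega : 0 < d)
    obtain ⟨a, ha⟩ := Complex.exists_root hdegpos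
    have hPa : P.eval a = 0 := ha
    have hP'a : (derivative P).eval a = 0 := by
      have h := congrArg (eval a) hQ
      simp only [hQdef, eval_sub, eval_mul, eval_pow, eval_C, eval_zero, hPa] at h
      have : ((d : ℂ) - 1) * (derivative P).eval a ^ 2 = 0 := by linear_combination -h
      have := (mul_eq_zero.mp this).resolve_left hd1ne
      exact pow_eq_zero_iff (by norm_num) |>.mp this
    have hP''a : (derivative (derivative P)).eval a ≠ 0 := fun h => hB a hPa hP'a h
    obtain ⟨S, hS⟩ := dvd_iff_isRoot.mpr hPa
    have hS0 : S.eval a = 0 := by rw [hS] at hP'a; simpa using hP'a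
    obtain ⟨T, hT⟩ := dvd_iff_isRoot.mpr hS0
    have hP : P = (X - C a) ^ 2 * T := by rw [hS, hT]; ring
    have hP' : derivative P = (X - C a) * (2 * T + (X - C a) * derivative T) := by
      rw [hP]; simp [derivative_mul, derivative_pow, map_ofNat]; ring
    have hP'' : derivative (derivative P)
        = 2 * T + 4 * (X - C a) * derivative T + (X - C a) ^ 2 * derivative (derivative T) := by
      rw [hP']; simp [derivative_mul, derivative_pow, map_ofNat]; ring
    have hfac : Q = (X - C a) ^ 2 *
        (C (d : ℂ) * T * (2 * T + 4 * (X - C a) * derivative T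
            + (X - C a) ^ 2 * derivative (derivative T))
          - C ((d : ℂ) - 1) * (2 * T + (X - C a) * derivative T) ^ 2) := by
      rw [hQdef, hP'', hP', hP]; ring
    rw [hQ] at hfac
    have hXne : ((X : ℂ[X]) - C a) ^ 2 ≠ 0 := pow_ne_zero _ (X_sub_C_ne_zero a)
    have hB0 := (mul_eq_zero.mp hfac.symm).resolve_left hXne
    have hBa := congrArg (eval a) hB0
    simp at hBa
    -- hBa : d * T(a) * (2 T(a)) - (d-1) * (2 T(a))^2 = 0
    have hTa : T.eval a = 0 := by
      have h4 : ((4 : ℂ) - 2 * d) * (T.eval a) ^ 2 = 0 := by linear_combination hBa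
      have hne : (4 : ℂ) - 2 * d ≠ 0 := by
        intro h
        have : (d : ℂ) = 2 := by linear_combination -h / 2
        have : (d : ℕ) = 2 := by exact_mod_cast this
        omega
      have := (mul_eq_zero.mp h4).resolve_left hne
      exact pow_eq_zero_iff (by norm_num) |>.mp this
    apply hP''a
    rw [hP'']
    simp [hTa]
  · -- Q ≠ 0 : finite set of admissible u
    intro hA
    have hfin : (((fun z => z - (d : ℂ) * P.eval z / (derivative P).eval z) ''
        {z | Q.IsRoot z}) ∪ {z | (derivative P).IsRoot z}).Finite :=
      ((finite_setOf_isRoot hQ).image _).union (finite_setOf_isRoot hP'ne)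
    obtain ⟨u, hu⟩ := hfin.infinite_compl.nonempty
    obtain ⟨z, h1, h2⟩ := hA u
    apply hu
    by_cases hz : (derivative P).eval z = 0
    · right
      have hPz : P.eval z = 0 := by
        rw [hz, mul_zero, add_zero] at h1
        exact (mul_eq_zero.mp h1).resolve_left hdne
      have hP''z : (derivative (derivative P)).eval z ≠ 0 := fun h => hB z hPz hz h
      have huz : u = z := by
        rw [hz, mul_zero, zero_add] at h2
        have := (mul_eq_zero.mp h2).resolve_right hP''z
        exact sub_eq_zero.mp this
      rw [Set.mem_setOf_eq, huz]
      exact hz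
    · left
      refine ⟨z, ?_, ?_⟩
      · show Q.eval z = 0
        simp only [hQdef, eval_sub, eval_mul, eval_pow, eval_C]
        linear_combination (derivative (derivative P)).eval z * h1 - (derivative P).eval z * h2
      · field_simp
        linear_combination -h1

theorem polar_derivative_multiple_root_for_all_u_iff_triple_root
    (d : ℕ) (hd : 1 ≤ d) (P : ℂ[X]) (hm : P.Monic) (hdeg : P.natDegree = d) :
    ((∀ u : ℂ, ∃ z : ℂ,
        (d : ℂ) * P.eval z + (u - z) * (derivative P).eval z = 0 ∧
        ((d : ℂ) - 1) * (derivative P).eval z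
          + (u - z) * (derivative (derivative P)).eval z = 0)
      ↔ ∃ zs : ℂ, P.eval zs = 0 ∧ (derivative P).eval zs = 0 ∧
          (derivative (derivative P)).eval zs = 0) ∧
    ((¬ ∀ u : ℂ, ∃ z : ℂ,
        (d : ℂ) * P.eval z + (u - z) * (derivative P).eval z = 0 ∧
        ((d : ℂ) - 1) * (derivative P).eval z
          + (u - z) * (derivative (derivative P)).eval z = 0)
      ↔ ∀ z : ℂ, P.rootMultiplicity z ≤ 2) := by
  have hP0 : P ≠ 0 := hm.ne_zero
  have key : (∀ u : ℂ, ∃ z : ℂ,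
        (d : ℂ) * P.eval z + (u - z) * (derivative P).eval z = 0 ∧
        ((d : ℂ) - 1) * (derivative P).eval z
          + (u - z) * (derivative (derivative P)).eval z = 0)
      ↔ ∃ zs : ℂ, P.eval zs = 0 ∧ (derivative P).eval zs = 0 ∧
          (derivative (derivative P)).eval zs = 0 := by
    constructor
    · intro hA
      by_contra hB
      exact no_forall_of_no_triple d hd P hm hdeg hB hA
    · rintro ⟨zs, h0, h1, h2⟩ u
      exact ⟨zs, by rw [h0, h1]; ring, by rw [h1, h2]; ring⟩
  refine ⟨key, ?_⟩
  rw [key.not]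
  constructor
  · intro hB z
    rw [rootMultiplicity_le_iff hP0]
    intro hdvd
    obtain ⟨e0, e1, e2⟩ := evals_of_triple_dvd hdvd
    exact hB ⟨z, e0, e1, e2⟩
  · rintro hmul ⟨zs, h0, h1, h2⟩
    have h3 : 3 ≤ P.rootMultiplicity zs :=
      (le_rootMultiplicity_iff hP0).mpr (triple_dvd_of_evals h0 h1 h2)
    have := hmul zs
    omega
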